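/- Assume Weil's bound for the quadratic character. For any fixed n, there exists Q such that for all odd prime powers q > Q and all disjoint sets A, B ⊆ F_q with |A| + |B| ≤ n, there exists x ∈ F_q with x - a a nonzero square for every a ∈ A and x - b a non-square for every b ∈ B. -/

import Mathlib

open Finset

/-- The quadratic character, viewed as a real-valued function. -/
noncomputable def qc (F : Type) [Field F] [Fintype F] [DecidableEq F] : F → ℝ :=
  fun y => ((quadraticChar F y : ℤ) : ℝ)

lemma qc_abs_le (F : Type) [Field F] [Fintype F] [DecidableEq F] (y : F) :
    |qc F y| ≤ 1 := by
  have h : |(quadraticChar F y : ℤ)| ≤ 1 := by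
    rcases eq_or_ne y 0 with h | h
    · simp [quadraticChar_eq_zero_iff.mpr h]
    · rcases quadraticChar_dichotomy h with h1 | h1 <;> simp [h1]
  show |((quadraticChar F y : ℤ) : ℝ)| ≤ 1
  exact_mod_cast h

/-- Assuming Weil's bound for the quadratic character, for every fixed n there is Q
such that every finite field of odd order > Q satisfies the n-th adjacency property:
for disjoint A, B with |A| + |B| ≤ n there is x with x - a a nonzero square for all
a ∈ A and x - b a non-square for all b ∈ B. -/
theorem paley_adjacency_property
    (hWeil : ∀ (F : Type) [Field F] [Fintype F] [DecidableEq F],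
      Odd (Fintype.card F) → ∀ (k : ℕ) (c : Fin k → F), Function.Injective c → 1 ≤ k →
        |∑ x : F, ∏ i : Fin k, ((quadraticChar F (x - c i) : ℤ) : ℝ)| ≤
          ((k : ℝ) - 1) * Real.sqrt (Fintype.card F))
    (n : ℕ) :
    ∃ Q : ℕ, ∀ (F : Type) [Field F] [Fintype F] [DecidableEq F],
      Odd (Fintype.card F) → Q < Fintype.card F →
      ∀ A B : Finset F, Disjoint A B → A.card + B.card ≤ n →
        ∃ x : F, (∀ a ∈ A, x - a ≠ 0 ∧ IsSquare (x - a)) ∧ (∀ b ∈ B, ¬ IsSquare (x - b)) := by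
  classical
  refine ⟨(2 ^ (n + 1) * (n + 1)) ^ 2, ?_⟩
  intro F _ _ _ hodd hQ A B hAB hcard
  set q : ℕ := Fintype.card F with hqdef
  have hq0 : 0 < q := Fintype.card_pos
  set ε : F → ℝ := fun c => if c ∈ A then 1 else -1 with hεdef
  set S : Finset F := A ∪ B with hSdef
  have hScard : S.card ≤ n := le_trans (card_union_le _ _) hcard
  have hεabs : ∀ c, |ε c| = 1 := by
    intro c; by_cases h : c ∈ A <;> simp [hεdef, h]
  have hfacbd : ∀ (x c : F), 0 ≤ 1 + ε c * qc F (x - c) ∧ 1 + ε c * qc F (x - c) ≤ 2 := by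
    intro x c
    have h1 : |ε c * qc F (x - c)| ≤ 1 := by
      rw [abs_mul, hεabs c, one_mul]; exact qc_abs_le F _
    rw [abs_le] at h1
    constructor <;> linarith [h1.1, h1.2]
  set P : F → ℝ := fun x => ∏ c ∈ S, (1 + ε c * qc F (x - c)) with hPdef
  -- Weil's bound for products over finsets
  have hWeilSet : ∀ u : Finset F, u.Nonempty →
      |∑ x : F, ∏ c ∈ u, qc F (x - c)| ≤ ((u.card : ℝ) - 1) * Real.sqrt q := by
    intro u hu
    set e : Fin u.card → F := fun i => (u.equivFin.symm i : F) with hedef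
    have hinj : Function.Injective e := fun i j hij =>
      u.equivFin.symm.injective (Subtype.ext hij)
    have h1 : 1 ≤ u.card := hu.card_pos
    have hW := hWeil F hodd u.card e hinj h1
    have hsum : ∀ x : F, ∏ c ∈ u, qc F (x - c)
        = ∏ i : Fin u.card, ((quadraticChar F (x - e i) : ℤ) : ℝ) := by
      intro x
      rw [← Finset.prod_coe_sort u (fun c => qc F (x - c))]
      exact (Equiv.prod_comp u.equivFin.symm fun c : u => qc F (x - (c : F))).symm
    calc |∑ x : F, ∏ c ∈ u, qc F (x - c)|
        = |∑ x : F, ∏ i : Fin u.card, ((quadraticChar F (x - e i) : ℤ) : ℝ)| := by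
          rw [Finset.sum_congr rfl fun x _ => hsum x]
      _ ≤ ((u.card : ℝ) - 1) * Real.sqrt q := hW
  -- Expansion of P
  have hexpand : ∀ x : F, P x = ∑ t ∈ S.powerset, ∏ c ∈ S \ t, (ε c * qc F (x - c)) := by
    intro x
    have := Finset.prod_add (fun _ : F => (1 : ℝ)) (fun c => ε c * qc F (x - c)) S
    simpa using this
  set f : Finset F → ℝ :=
    fun t => (∏ c ∈ S \ t, ε c) * ∑ x : F, ∏ c ∈ S \ t, qc F (x - c) with hfdef
  have hsumP : ∑ x : F, P x = ∑ t ∈ S.powerset, f t := by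
    calc ∑ x : F, P x
        = ∑ x : F, ∑ t ∈ S.powerset, ∏ c ∈ S \ t, (ε c * qc F (x - c)) :=
          Finset.sum_congr rfl fun x _ => hexpand x
      _ = ∑ t ∈ S.powerset, ∑ x : F, ∏ c ∈ S \ t, (ε c * qc F (x - c)) := Finset.sum_comm
      _ = ∑ t ∈ S.powerset, f t := by
          refine Finset.sum_congr rfl fun t _ => ?_
          show ∑ x : F, ∏ c ∈ S \ t, (ε c * qc F (x - c))
              = (∏ c ∈ S \ t, ε c) * ∑ x : F, ∏ c ∈ S \ t, qc F (x - c)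
          rw [Finset.mul_sum]
          exact Finset.sum_congr rfl fun x _ => Finset.prod_mul_distrib
  have hfS : f S = q := by
    simp [hfdef, Finset.sdiff_self, hqdef]
  have hsplit : ∑ t ∈ S.powerset, f t = f S + ∑ t ∈ (S.powerset.erase S), f t :=
    (Finset.add_sum_erase _ f (mem_powerset_self S)).symm
  have hsqrt_nonneg : (0:ℝ) ≤ Real.sqrt q := Real.sqrt_nonneg _
  -- bound each term
  have hterm : ∀ t ∈ S.powerset.erase S, |f t| ≤ (n : ℝ) * Real.sqrt q := by
    intro t ht
    obtain ⟨hne, htS⟩ := Finset.mem_erase.mp ht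
    have htsub := Finset.mem_powerset.mp htS
    have hu : (S \ t).Nonempty :=
      Finset.sdiff_nonempty.mpr fun h => hne (subset_antisymm htsub h)
    have hucard : (S \ t).card ≤ n :=
      le_trans (Finset.card_le_card (Finset.sdiff_subset)) hScard
    have hW := hWeilSet _ hu
    have hεprod : |∏ c ∈ S \ t, ε c| = 1 := by
      rw [Finset.abs_prod]
      rw [Finset.prod_congr rfl fun c _ => hεabs c]
      simp
    calc |f t| = |∏ c ∈ S \ t, ε c| * |∑ x : F, ∏ c ∈ S \ t, qc F (x - c)| := abs_mul _ _
      _ = |∑ x : F, ∏ c ∈ S \ t, qc F (x - c)| := by rw [hεprod, one_mul]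
      _ ≤ (((S \ t).card : ℝ) - 1) * Real.sqrt q := hW
      _ ≤ (n : ℝ) * Real.sqrt q := by
          apply mul_le_mul_of_nonneg_right _ hsqrt_nonneg
          have : ((S \ t).card : ℝ) ≤ n := by exact_mod_cast hucard
          linarith
  have hR : |∑ t ∈ S.powerset.erase S, f t| ≤ (2 : ℝ) ^ n * ((n : ℝ) * Real.sqrt q) := by
    calc |∑ t ∈ S.powerset.erase S, f t| ≤ ∑ t ∈ S.powerset.erase S, |f t| :=
          Finset.abs_sum_le_sum_abs _ _
      _ ≤ ∑ _t ∈ S.powerset.erase S, (n : ℝ) * Real.sqrt q :=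
          Finset.sum_le_sum hterm
      _ = ((S.powerset.erase S).card : ℝ) * ((n : ℝ) * Real.sqrt q) := by
          rw [Finset.sum_const, nsmul_eq_mul]
      _ ≤ (2 : ℝ) ^ n * ((n : ℝ) * Real.sqrt q) := by
          apply mul_le_mul_of_nonneg_right _ (by positivity)
          have h1 : (S.powerset.erase S).card ≤ 2 ^ n := by
            calc (S.powerset.erase S).card ≤ S.powerset.card := Finset.card_erase_le
              _ = 2 ^ S.card := Finset.card_powerset S
              _ ≤ 2 ^ n := Nat.pow_le_pow_right (by norm_num) hScard
          exact_mod_cast h1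
  have hsum_lb : (q : ℝ) - (2 : ℝ) ^ n * ((n : ℝ) * Real.sqrt q) ≤ ∑ x : F, P x := by
    rw [hsumP, hsplit, hfS]
    have := (abs_le.mp hR).1
    linarith
  -- bound on P pointwise
  have hP0 : ∀ x : F, 0 ≤ P x := fun x =>
    Finset.prod_nonneg fun c _ => (hfacbd x c).1
  have hP2 : ∀ x : F, P x ≤ (2 : ℝ) ^ n := by
    intro x
    calc P x ≤ ∏ _c ∈ S, (2 : ℝ) :=
          Finset.prod_le_prod (fun c _ => (hfacbd x c).1) (fun c _ => (hfacbd x c).2)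
      _ = 2 ^ S.card := Finset.prod_const 2
      _ ≤ 2 ^ n := by
          apply pow_le_pow_right₀ (by norm_num) hScard
  have hsumS : ∑ x ∈ S, P x ≤ (n : ℝ) * 2 ^ n := by
    calc ∑ x ∈ S, P x ≤ ∑ _x ∈ S, (2 : ℝ) ^ n := Finset.sum_le_sum fun x _ => hP2 x
      _ = (S.card : ℝ) * 2 ^ n := by rw [Finset.sum_const, nsmul_eq_mul]
      _ ≤ (n : ℝ) * 2 ^ n := by
          apply mul_le_mul_of_nonneg_right _ (by positivity)
          exact_mod_cast hScard
  have hcompl : ∑ x ∈ Sᶜ, P x = ∑ x : F, P x - ∑ x ∈ S, P x := by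
    rw [← Finset.sum_add_sum_compl S P]; ring
  -- numeric estimate
  have hQr : (((2 ^ (n + 1) * (n + 1)) ^ 2 : ℕ) : ℝ) < (q : ℝ) := by exact_mod_cast hQ
  have hsqrt_gt : (2 : ℝ) ^ (n + 1) * ((n : ℝ) + 1) < Real.sqrt q := by
    rw [show ((2:ℝ) ^ (n+1) * ((n:ℝ)+1)) = (((2 ^ (n + 1) * (n + 1)) : ℕ) : ℝ) by push_cast; ring]
    rw [Real.lt_sqrt (by positivity)]
    calc (((2 ^ (n + 1) * (n + 1)) : ℕ) : ℝ) ^ 2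
        = (((2 ^ (n + 1) * (n + 1)) ^ 2 : ℕ) : ℝ) := by push_cast; ring
      _ < (q : ℝ) := hQr
  have hsqrt_ge1 : (1 : ℝ) ≤ Real.sqrt q := by
    rw [show (1:ℝ) = Real.sqrt 1 by simp]
    apply Real.sqrt_le_sqrt
    exact_mod_cast hq0
  have hq_eq : (q : ℝ) = Real.sqrt q * Real.sqrt q :=
    (Real.mul_self_sqrt (by positivity)).symm
  have hpos : 0 < ∑ x ∈ Sᶜ, P x := by
    rw [hcompl]
    have h2 : (2:ℝ) ^ (n+1) = 2 * 2 ^ n := by ring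
    rw [h2] at hsqrt_gt
    set s := Real.sqrt q with hs
    have hspos : (0:ℝ) < s := lt_of_lt_of_le one_pos hsqrt_ge1
    have hc : (0:ℝ) < (2:ℝ)^n := by positivity
    have hN : (0:ℝ) ≤ (n:ℝ) := by positivity
    nlinarith [mul_lt_mul_of_pos_right hsqrt_gt hspos,
      mul_le_mul_of_nonneg_left hsqrt_ge1 (mul_nonneg hN hc.le),
      mul_le_mul_of_nonneg_left hsqrt_ge1 hc.le]
  -- extract a good x
  have hx : ∃ x ∈ Sᶜ, P x ≠ 0 := by
    by_contra h
    push_neg at h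
    rw [Finset.sum_eq_zero h] at hpos
    exact lt_irrefl 0 hpos
  obtain ⟨x, hxmem, hxne⟩ := hx
  have hxS : x ∉ S := Finset.mem_compl.mp hxmem
  have hfacne : ∀ c ∈ S, 1 + ε c * qc F (x - c) ≠ 0 := by
    rw [hPdef] at hxne
    exact fun c hc => Finset.prod_ne_zero_iff.mp hxne c hc
  refine ⟨x, fun a ha => ?_, fun b hb => ?_⟩
  · have haS : a ∈ S := Finset.mem_union_left _ ha
    have hxa : x - a ≠ 0 := sub_ne_zero.mpr fun h => hxS (h ▸ haS)
    rcases quadraticChar_dichotomy hxa with h1 | h1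
    · exact ⟨hxa, (quadraticChar_one_iff_isSquare hxa).mp h1⟩
    · exfalso
      apply hfacne a haS
      have hεa : ε a = 1 := if_pos ha
      rw [hεa, one_mul]
      simp [qc, h1]
  · have hbS : b ∈ S := Finset.mem_union_right _ hb
    have hxb : x - b ≠ 0 := sub_ne_zero.mpr fun h => hxS (h ▸ hbS)
    have hbA : b ∉ A := Finset.disjoint_right.mp hAB hb
    rcases quadraticChar_dichotomy hxb with h1 | h1
    · exfalso
      apply hfacne b hbS
      have hεb : ε b = -1 := if_neg hbA
      rw [hεb]
      simp [qc, h1]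
    · exact quadraticChar_neg_one_iff_not_isSquare.mp h1
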